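/- arXiv:2206.00981 — 4 statements merged into one kernel-verified Lean document; each statement's English description precedes it below -/
import Mathlib

section
/- Let R be a commutative local ring with 2 invertible, let p ≤ n, and let (u₁, …, u_p) be a unimodular sequence of vectors in R^{2n}. Then there exist vectors u₁♯, …, u_p♯ ∈ R^{2n} such that ⟨uᵢ, uⱼ♯⟩ = δ_{ij} for all 1 ≤ i, j ≤ p. Equivalently, the R-linear map T : R^{2n} → R^p, x ↦ (⟨u₁, x⟩, …, ⟨u_p, x⟩) is surjective. -/
open Matrix Function

def psi (n : ℕ) (R : Type*) [CommRing R] : Matrix (Fin (2*n)) (Fin (2*n)) R :=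
  Matrix.of fun i j => if i.val / 2 = j.val / 2 ∧ i.val ≠ j.val then 1 else 0

def form (n : ℕ) {R : Type*} [CommRing R] (u v : Fin (2*n) → R) : R :=
  u ⬝ᵥ (psi n R) *ᵥ v

def Onn (n : ℕ) (R : Type*) [CommRing R] : Subgroup (GL (Fin (2*n)) R) where
  carrier := {A | (↑A : Matrix (Fin (2*n)) (Fin (2*n)) R)ᵀ * psi n R * ↑A = psi n R}
  one_mem' := by simp
  mul_mem' := by
    intro a b ha hb
    simp only [Set.mem_setOf_eq, Units.val_mul, Matrix.transpose_mul] at *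
    calc (↑b : Matrix _ _ R)ᵀ * (↑a : Matrix _ _ R)ᵀ * psi n R * (↑a * ↑b)
        = (↑b : Matrix _ _ R)ᵀ * (((↑a : Matrix _ _ R)ᵀ * psi n R * ↑a) * ↑b) := by
          simp only [Matrix.mul_assoc]
      _ = psi n R := by rw [ha, ← Matrix.mul_assoc, hb]
  inv_mem' := by
    intro a ha
    simp only [Set.mem_setOf_eq] at *
    set A : Matrix (Fin (2*n)) (Fin (2*n)) R := ↑a with hA
    set B : Matrix (Fin (2*n)) (Fin (2*n)) R := ↑(a⁻¹) with hB
    have hAB : A * B = 1 := by rw [hA, hB]; exact a.mul_inv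
    have key : Bᵀ * (Aᵀ * psi n R * A) * B
        = (A * B)ᵀ * psi n R * (A * B) := by
      rw [Matrix.transpose_mul]
      simp only [Matrix.mul_assoc]
    conv_lhs => rw [← ha]
    rw [key, hAB]
    simp

def eVec (n : ℕ) (R : Type*) [CommRing R] (i : Fin n) : Fin (2*n) → R :=
  Pi.single ⟨2*i.val, by have := i.isLt; omega⟩ 1

def fVec (n : ℕ) (R : Type*) [CommRing R] (i : Fin n) : Fin (2*n) → R :=
  Pi.single ⟨2*i.val+1, by have := i.isLt; omega⟩ 1

def IsUnimodular (R : Type*) [CommRing R] {M : Type*} [AddCommGroup M] [Module R M]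
    (m : ℕ) {q : ℕ} (v : Fin q → M) : Prop :=
  ∀ s : Finset (Fin q), s.card ≤ min m q →
    ∃ N : Submodule R M, IsCompl (Submodule.span R (v '' ↑s)) N ∧
      Module.Free R (Submodule.span R (v '' ↑s)) ∧
      Module.finrank R (Submodule.span R (v '' ↑s)) = s.card

def IsTotallyIsotropic (n : ℕ) {R : Type*} [CommRing R] {q : ℕ}
    (v : Fin q → (Fin (2*n) → R)) : Prop :=
  ∀ i j, form n (v i) (v j) = 0

def IU (n : ℕ) (R : Type*) [CommRing R] (k : ℕ) :=
  {v : Fin k → Fin (2*n) → R // IsTotallyIsotropic n v ∧ IsUnimodular R (2*n) v}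

def stabOf (n : ℕ) (R : Type*) [CommRing R] (S : Set (Fin (2*n) → R)) :
    Subgroup (GL (Fin (2*n)) R) where
  carrier := {A | ∀ v ∈ S, (↑A : Matrix (Fin (2*n)) (Fin (2*n)) R) *ᵥ v = v}
  one_mem' := by intro v hv; simp
  mul_mem' := by
    intro a b ha hb v hv
    show (↑(a*b) : Matrix (Fin (2*n)) (Fin (2*n)) R) *ᵥ v = v
    rw [Units.val_mul, ← Matrix.mulVec_mulVec, hb v hv, ha v hv]
  inv_mem' := by
    intro a ha v hv
    show (↑(a⁻¹) : Matrix (Fin (2*n)) (Fin (2*n)) R) *ᵥ v = v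
    conv_lhs => rw [← ha v hv]
    rw [Matrix.mulVec_mulVec]
    have : (↑(a⁻¹) : Matrix (Fin (2*n)) (Fin (2*n)) R) * (↑a : Matrix (Fin (2*n)) (Fin (2*n)) R) = 1 := a.inv_mul
    rw [this, Matrix.one_mulVec]

def Dmat (n k : ℕ) {R : Type*} [CommRing R] (a : Rˣ) :
    Matrix (Fin (2*n)) (Fin (2*n)) R :=
  Matrix.diagonal (fun i =>
    if i.val < 2*k then (if i.val % 2 = 0 then (a : R) else ((a⁻¹ : Rˣ) : R)) else 1)

def Bmat (n : ℕ) {R : Type*} [CommRing R] (c : R) :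
    Matrix (Fin (2*n)) (Fin (2*n)) R :=
  Matrix.diagonal (fun i => if i.val % 2 = 0 then 1 else c)


lemma psi_mul_psi' (n : ℕ) (R : Type*) [CommRing R] : psi n R * psi n R = 1 := by
  ext i j
  have hi' : 2*(i.val/2) + (1 - i.val%2) < 2*n := by have := i.isLt; omega
  set i' : Fin (2*n) := ⟨2*(i.val/2) + (1 - i.val%2), hi'⟩ with hi'def
  have hpsi : ∀ a b : Fin (2*n), psi n R a b =
      if b.val = 2*(a.val/2) + (1 - a.val%2) then 1 else 0 := by
    intro a b
    have : (a.val / 2 = b.val / 2 ∧ a.val ≠ b.val) ↔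
        b.val = 2*(a.val/2) + (1 - a.val%2) := by omega
    simp only [psi, Matrix.of_apply]
    rw [if_congr this rfl rfl]
  rw [Matrix.mul_apply]
  have : ∀ k : Fin (2*n), psi n R i k * psi n R k j
      = if k = i' then psi n R k j else 0 := by
    intro k
    rw [hpsi i k]
    by_cases h : k = i'
    · subst h; simp [hi'def]
    · have : ¬ (k.val = 2*(i.val/2) + (1 - i.val%2)) := by
        intro hv; exact h (Fin.ext hv)
      simp [this, h]
  rw [Finset.sum_congr rfl (fun k _ => this k), Finset.sum_ite_eq' _ i']
  simp only [Finset.mem_univ, if_true]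
  rw [hpsi i' j, Matrix.one_apply]
  have : (j.val = 2*(i'.val/2) + (1 - i'.val%2)) ↔ i = j := by
    rw [Fin.ext_iff]; simp only [hi'def]; omega
  rw [if_congr this rfl rfl]

lemma exists_left_inverse' {R : Type*} [CommRing R] [Nontrivial R] {n p : ℕ} (hp : p ≤ 2*n)
    (u : Fin p → Fin (2*n) → R) (hu : IsUnimodular R (2*n) u) :
    ∃ A : Matrix (Fin p) (Fin (2*n)) R, ∀ i, A *ᵥ u i = Pi.single i 1 := by
  obtain ⟨N, hcompl, hfree, hrank⟩ := hu Finset.univ (by simpa using hp)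
  set S := Submodule.span R (u '' ↑(Finset.univ : Finset (Fin p))) with hSdef
  have hS : S = Submodule.span R (Set.range u) := by
    rw [hSdef, Finset.coe_univ, Set.image_univ]
  have hmem : ∀ i, u i ∈ S := fun i => hS ▸ Submodule.subset_span ⟨i, rfl⟩
  have hfin : Module.Finite R S := hS ▸ Module.Finite.span_of_finite R (Set.finite_range u)
  have hrank' : Module.finrank R S = p := by simpa using hrank
  let φ : (Fin p → R) →ₗ[R] S :=
    LinearMap.codRestrict S (Fintype.linearCombination R u) (fun c => by
      rw [hS, ← Fintype.range_linearCombination R u]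
      exact LinearMap.mem_range_self _ c)
  have hφu : ∀ i, φ (Pi.single i 1) = ⟨u i, hmem i⟩ := by
    intro i
    apply Subtype.ext
    show Fintype.linearCombination R u (Pi.single i 1) = u i
    rw [Fintype.linearCombination_apply]
    simp [Pi.single_apply, ite_smul]
  have hφsurj : Function.Surjective φ := by
    intro s
    have : s.1 ∈ LinearMap.range (Fintype.linearCombination R u) := by
      rw [Fintype.range_linearCombination R u, ← hS]; exact s.2
    obtain ⟨c, hc⟩ := this
    exact ⟨c, Subtype.ext hc⟩
  let b : Module.Basis (Fin p) R S := Module.finBasisOfFinrankEq R S hrank'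
  let e : S ≃ₗ[R] (Fin p → R) := b.equivFun
  have hinj : Function.Injective (e.toLinearMap ∘ₗ φ) :=
    OrzechProperty.injective_of_surjective_endomorphism _
      (e.surjective.comp hφsurj)
  have hφinj : Function.Injective φ := by
    intro a b hab
    exact hinj (by simp [LinearMap.comp_apply, hab])
  let φe : (Fin p → R) ≃ₗ[R] S := LinearEquiv.ofBijective φ ⟨hφinj, hφsurj⟩
  let π : (Fin (2*n) → R) →ₗ[R] S := Submodule.linearProjOfIsCompl S N hcompl
  let L : (Fin (2*n) → R) →ₗ[R] (Fin p → R) := φe.symm.toLinearMap ∘ₗ π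
  have hL : ∀ i, L (u i) = Pi.single i 1 := by
    intro i
    show φe.symm (π (u i)) = Pi.single i 1
    have h1 : π (u i) = ⟨u i, hmem i⟩ :=
      Submodule.linearProjOfIsCompl_apply_left hcompl ⟨u i, hmem i⟩
    have h2 : φe (Pi.single i 1) = ⟨u i, hmem i⟩ := hφu i
    rw [h1, ← h2, LinearEquiv.symm_apply_apply]
  refine ⟨LinearMap.toMatrix' L, fun i => ?_⟩
  have : (LinearMap.toMatrix' L) *ᵥ u i = Matrix.toLin' (LinearMap.toMatrix' L) (u i) :=
    (Matrix.toLin'_apply _ _).symm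
  rw [this, Matrix.toLin'_toMatrix', hL i]

theorem statement_5 (R : Type*) [CommRing R] [IsLocalRing R] (h2 : IsUnit (2 : R))
    (n p : ℕ) (hp : p ≤ n) (u : Fin p → Fin (2*n) → R)
    (hu : IsUnimodular R (2*n) u) :
    (∃ us : Fin p → Fin (2*n) → R,
      ∀ i j : Fin p, form n (u i) (us j) = if i = j then 1 else 0) ∧
    Function.Surjective (fun x : Fin (2*n) → R => fun i : Fin p => form n (u i) x) := by
  obtain ⟨A, hA⟩ := exists_left_inverse' (by omega) u hu
  have key : ∀ (y : Fin p → R) (i : Fin p),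
      form n (u i) (psi n R *ᵥ (Aᵀ *ᵥ y)) = y i := by
    intro y i
    show u i ⬝ᵥ psi n R *ᵥ (psi n R *ᵥ (Aᵀ *ᵥ y)) = y i
    rw [Matrix.mulVec_mulVec, psi_mul_psi', Matrix.one_mulVec,
      Matrix.dotProduct_mulVec, Matrix.vecMul_transpose, hA i]
    rw [single_dotProduct, one_mul]
  constructor
  · refine ⟨fun j => psi n R *ᵥ (Aᵀ *ᵥ Pi.single j 1), fun i j => ?_⟩
    rw [key (Pi.single j 1) i]
    by_cases h : i = j <;> simp [h, Pi.single_apply]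
  · intro y
    exact ⟨psi n R *ᵥ (Aᵀ *ᵥ y), funext fun i => key y i⟩
end

section
/- Let R be a local ring whose residue field is infinite. Then for every m ≥ 1 there exists an S(m)-sequence in R: units a₁, …, a_m ∈ R^* such that for every non-empty subset I ⊆ {1,…,m}, the partial sum a_I := ∑_{i∈I} aᵢ is a unit in R. -/
open Matrix Function

lemma field_seq (k : Type*) [Field k] [Infinite k] (m : ℕ) :
    ∃ x : Fin m → k, ∀ I : Finset (Fin m), I.Nonempty → ∑ i ∈ I, x i ≠ 0 := by
  classical
  induction m with
  | zero =>
    exact ⟨fun i => 0, fun I hI => absurd (Finset.eq_empty_of_isEmpty I)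
      (Finset.nonempty_iff_ne_empty.mp hI)⟩
  | succ m ih =>
    obtain ⟨x, hx⟩ := ih
    set S : Finset k := Finset.univ.powerset.image (fun I : Finset (Fin m) => -∑ i ∈ I, x i)
      with hS
    obtain ⟨y, hy⟩ := Infinite.exists_notMem_finset S
    refine ⟨Fin.snoc x y, ?_⟩
    have key : ∀ I : Finset (Fin (m+1)), Fin.last m ∉ I →
        ∃ J : Finset (Fin m), (∑ i ∈ I, (Fin.snoc x y : Fin (m+1) → k) i = ∑ j ∈ J, x j)
          ∧ (I.Nonempty → J.Nonempty) := by
      intro I hI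
      refine ⟨Finset.univ.filter (fun j => j.castSucc ∈ I), ?_, ?_⟩
      · have himg : (Finset.univ.filter (fun j : Fin m => j.castSucc ∈ I)).image Fin.castSucc
            = I := by
          ext i
          simp only [Finset.mem_image, Finset.mem_filter, Finset.mem_univ, true_and]
          constructor
          · rintro ⟨j, hj, rfl⟩; exact hj
          · intro hi
            have : i ≠ Fin.last m := fun h => hI (h ▸ hi)
            exact ⟨i.castPred this, by simpa using hi, by simp⟩
        conv_lhs => rw [← himg]
        rw [Finset.sum_image (fun a _ b _ h => Fin.castSucc_injective m h)]
        apply Finset.sum_congr rfl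
        intro j _
        simp [Fin.snoc_castSucc]
      · rintro ⟨i, hi⟩
        have : i ≠ Fin.last m := fun h => hI (h ▸ hi)
        exact ⟨i.castPred this, by simpa using hi⟩
    intro I hIne
    by_cases hlast : Fin.last m ∈ I
    · rw [← Finset.insert_erase hlast, Finset.sum_insert (Finset.notMem_erase _ _)]
      obtain ⟨J, hJsum, -⟩ := key (I.erase (Fin.last m)) (Finset.notMem_erase _ _)
      rw [hJsum]
      intro h
      have h' : y + ∑ j ∈ J, x j = 0 := by simpa using h
      apply hy
      rw [hS]
      exact Finset.mem_image.mpr ⟨J, by simp, neg_eq_of_add_eq_zero_left h'⟩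
    · obtain ⟨J, hJsum, hJne⟩ := key I hlast
      rw [hJsum]
      exact hx J (hJne hIne)

theorem statement_16 (R : Type*) [CommRing R] [IsLocalRing R]
    (hres : Infinite (IsLocalRing.ResidueField R)) (m : ℕ) (hm : 1 ≤ m) :
    ∃ a : Fin m → Rˣ,
      ∀ I : Finset (Fin m), I.Nonempty → IsUnit (∑ i ∈ I, (a i : R)) := by
  obtain ⟨x, hx⟩ := field_seq (IsLocalRing.ResidueField R) m
  choose r hr using fun i => IsLocalRing.residue_surjective (R := R) (x i)
  have hunit : ∀ I : Finset (Fin m), I.Nonempty → IsUnit (∑ i ∈ I, r i) := by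
    intro I hI
    rw [← IsLocalRing.notMem_maximalIdeal]
    intro hmem
    apply hx I hI
    have : IsLocalRing.residue R (∑ i ∈ I, r i) = 0 := by
      rwa [← IsLocalRing.residue_eq_zero_iff] at hmem
    rw [map_sum] at this
    simpa [hr] using this
  refine ⟨fun i => (hunit {i} ⟨i, Finset.mem_singleton_self i⟩).unit, ?_⟩
  intro I hI
  simpa only [IsUnit.unit_spec, Finset.sum_singleton] using hunit I hI
end

section
/- Let R be a commutative local ring with infinite residue field, let L be a finitely generated free R-module of rank s, and let (v₁ⁱ, …, v_qⁱ), i = 1, …, ℓ, be finitely many unimodular sequences of length q < s in L. Then there exists v ∈ L such that (v, v₁ⁱ, …, v_qⁱ) is a unimodular sequence of length q+1 in L for every i = 1, …, ℓ. -/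
open Matrix Function

section AuxStatement17

open IsLocalRing Submodule Set Function Module

variable {R : Type*} [CommRing R] [IsLocalRing R]
variable {L : Type*} [AddCommGroup L] [Module R L]

noncomputable def resCoord {s : ℕ} (b : Basis (Fin s) R L) (x : L) : Fin s → ResidueField R :=
  fun j => residue R (b.repr x j)

noncomputable def liftVec {s : ℕ} (b : Basis (Fin s) R L) (u : Fin s → ResidueField R) : L :=
  ∑ j, (surjInv Ideal.Quotient.mk_surjective (u j)) • b j

lemma resCoord_liftVec {s : ℕ} (b : Basis (Fin s) R L) (u : Fin s → ResidueField R) :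
    resCoord b (liftVec b u) = u := by
  funext j
  simp only [resCoord, liftVec, map_sum, _root_.map_smul, Basis.repr_self, Finsupp.smul_single,
    smul_eq_mul, mul_one, Finsupp.finset_sum_apply, Finsupp.single_apply]
  simp only [apply_ite (residue R), map_zero]
  rw [Finset.sum_ite_eq' Finset.univ j _]
  simp only [Finset.mem_univ, if_true]
  exact surjInv_eq Ideal.Quotient.mk_surjective (u j)

lemma resCoord_add {s : ℕ} (b : Basis (Fin s) R L) (x y : L) :
    resCoord b (x + y) = resCoord b x + resCoord b y := by
  funext j; simp [resCoord]

lemma resCoord_smul {s : ℕ} (b : Basis (Fin s) R L) (c : R) (x : L) :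
    resCoord b (c • x) = residue R c • resCoord b x := by
  funext j; simp [resCoord, Finsupp.smul_apply, smul_eq_mul]

lemma resCoord_zero {s : ℕ} (b : Basis (Fin s) R L) : resCoord b (0 : L) = 0 := by
  funext j; simp [resCoord]

lemma resCoord_mem_span {s : ℕ} (b : Basis (Fin s) R L) {S : Set L} {x : L}
    (hx : x ∈ span R S) :
    resCoord b x ∈ span (ResidueField R) (resCoord b '' S) := by
  induction hx using span_induction with
  | mem y hy => exact subset_span ⟨y, hy, rfl⟩
  | zero => rw [resCoord_zero]; exact zero_mem _
  | add x y _ _ hx hy => rw [resCoord_add]; exact add_mem hx hy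
  | smul c x _ hx => rw [resCoord_smul]; exact Submodule.smul_mem _ _ hx

lemma lemA_statement17 {s : ℕ} (b : Basis (Fin s) R L) {ι : Type*} [Fintype ι] (w : ι → L)
    (hw : LinearIndependent (ResidueField R) fun i => resCoord b (w i)) :
    ∃ N : Submodule R L, IsCompl (span R (range w)) N ∧
      Module.Free R (span R (range w)) ∧
      Module.finrank R (span R (range w)) = Fintype.card ι := by
  classical
  set k := ResidueField R
  set B0 : Basis (ι ⊕ Basis.sumExtendIndex hw) k (Fin s → k) := Basis.sumExtend hw with hB0
  have hB0inl : ∀ i, B0 (Sum.inl i) = resCoord b (w i) := by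
    intro i
    simp only [hB0, Basis.sumExtend, Basis.reindex_apply, Equiv.symm_symm, Equiv.trans_apply,
      Trans.trans, Equiv.trans_apply, Equiv.sumCongr_apply, Sum.map_inl,
      Equiv.Set.sumDiffSubset_apply_inl,
      Basis.extend_apply_self, Equiv.ofInjective_apply, Set.inclusion_mk]
    rfl
  haveI : Fintype (ι ⊕ Basis.sumExtendIndex hw) := FiniteDimensional.fintypeBasisIndex B0
  have hcard : Fintype.card (ι ⊕ Basis.sumExtendIndex hw) = s := by
    rw [← Module.finrank_eq_card_basis B0]
    simp
  set g : ι ⊕ Basis.sumExtendIndex hw → L :=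
    Sum.elim w (fun x => liftVec b (B0 (Sum.inr x))) with hg
  have hresg : ∀ p, resCoord b (g p) = B0 p := by
    rintro (i | x)
    · exact (hB0inl i).symm
    · exact resCoord_liftVec b _
  set e : (ι ⊕ Basis.sumExtendIndex hw) ≃ Fin s := Fintype.equivFinOfCardEq hcard with he
  set A : Matrix (Fin s) (Fin s) R := b.toMatrix (g ∘ e.symm) with hAdef
  have hmap : A.map (residue R) = (Pi.basisFun k (Fin s)).toMatrix ⇑(B0.reindex e) := by
    ext i j
    simp only [Matrix.map_apply, hAdef, Basis.toMatrix_apply, Pi.basisFun_repr,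
      Basis.reindex_apply, Function.comp_apply]
    exact congrFun (hresg (e.symm j)) i
  have hA : IsUnit A.det := by
    have h1 : IsUnit (A.map (residue R)).det := by
      rw [hmap]
      letI := (Pi.basisFun k (Fin s)).invertibleToMatrix (B0.reindex e)
      exact (Matrix.isUnit_iff_isUnit_det _).mp (isUnit_of_invertible _)
    rw [← RingHom.mapMatrix_apply, ← RingHom.map_det] at h1
    have h2 : residue R A.det ≠ 0 := h1.ne_zero
    rw [← IsLocalRing.notMem_maximalIdeal]
    intro hmem
    exact h2 (Ideal.Quotient.eq_zero_iff_mem.mpr hmem)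
  set B : Basis (Fin s) R L := b.map (Matrix.toLinearEquiv b A hA) with hBdef
  have hBg : ∀ j, B j = g (e.symm j) := by
    intro j
    have : B j = Matrix.toLin b b A (b j) := rfl
    rw [this, Matrix.toLin_self]
    simp only [hAdef, Basis.toMatrix_apply, Function.comp_apply]
    exact b.sum_repr (g (e.symm j))
  set B2 : Basis (ι ⊕ Basis.sumExtendIndex hw) R L := B.reindex e.symm with hB2
  have hB2g : ∀ p, B2 p = g p := by
    intro p
    rw [hB2, Basis.reindex_apply, Equiv.symm_symm, hBg, Equiv.symm_apply_apply]
  have hwcomp : w = ⇑B2 ∘ Sum.inl := by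
    funext i; rw [Function.comp_apply, hB2g]; rfl
  have hrange : range w = ⇑B2 '' (range Sum.inl) := by
    rw [← Set.range_comp]; exact congrArg Set.range hwcomp
  have hwli : LinearIndependent R w :=
    hwcomp ▸ (B2.linearIndependent.comp Sum.inl Sum.inl_injective)
  refine ⟨span R (B2 '' (range Sum.inr)), ⟨?_, ?_⟩, ?_, ?_⟩
  · rw [hrange]
    exact B2.linearIndependent.disjoint_span_image
      (isCompl_range_inl_range_inr.disjoint)
  · rw [hrange, codisjoint_iff, ← Submodule.span_union, ← Set.image_union,
      Set.range_inl_union_range_inr, Set.image_univ, B2.span_eq]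
  · exact Module.Free.of_basis (Basis.span hwli)
  · rw [Module.finrank_eq_card_basis (Basis.span hwli)]

lemma lemB_statement17 {s : ℕ} (b : Basis (Fin s) R L) {ι : Type*} [Fintype ι] (w : ι → L)
    (N : Submodule R L) (hc : IsCompl (span R (range w)) N)
    (hfree : Module.Free R (span R (range w)))
    (hrk : Module.finrank R (span R (range w)) = Fintype.card ι) :
    LinearIndependent (ResidueField R) fun i => resCoord b (w i) := by
  classical
  set k := ResidueField R
  set M := span R (range w) with hM
  set t := Fintype.card ι
  have hsL : Module.finrank R L = s := Module.finrank_eq_card_basis b ▸ by simp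
  haveI : Module.Finite R L := Module.Finite.of_basis b
  haveI : Module.Free R L := Module.Free.of_basis b
  let eq := Submodule.prodEquivOfIsCompl M N hc
  haveI : Module.Finite R M := Module.Finite.span_of_finite R (Set.finite_range w)
  haveI : Module.Finite R N := by
    have : Function.Surjective ((LinearMap.snd R M N) ∘ₗ (eq.symm : L →ₗ[R] M × N)) := by
      intro n
      exact ⟨eq (0, n), by simp [eq]⟩
    exact Module.Finite.of_surjective _ this
  haveI : Module.Projective R N := by
    refine Module.Projective.of_split (N.subtype)
      ((LinearMap.snd R M N) ∘ₗ (eq.symm : L →ₗ[R] M × N)) ?_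
    ext n
    simp [eq, Submodule.prodEquivOfIsCompl_symm_apply_right]
  haveI : Module.FinitePresentation R N := Module.finitePresentation_of_projective R N
  haveI : Module.Free R N := Module.free_of_flat_of_isLocalRing
  have hsum : t + Module.finrank R N = s := by
    rw [← hrk, ← Module.finrank_prod, eq.finrank_eq, hsL]
  set r := Module.finrank R N
  let cb := Module.Free.chooseBasis R N
  have hcardN : Fintype.card (Module.Free.ChooseBasisIndex R N) = r :=
    (Module.finrank_eq_card_chooseBasisIndex R N).symm
  set cN : Module.Free.ChooseBasisIndex R N → L := fun i => (cb i : L) with hcN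
  have hNspan : span R (range cN) = N := by
    have : range cN = N.subtype '' (range cb) := by
      rw [← Set.range_comp]; rfl
    rw [this, ← Submodule.map_span, cb.span_eq, Submodule.map_top, Submodule.range_subtype]
  set P := span k (range fun i => resCoord b (w i)) with hP
  set Q := span k (range fun i => resCoord b (cN i)) with hQ
  have htop : P ⊔ Q = ⊤ := by
    rw [eq_top_iff]
    rintro u -
    obtain ⟨x, hx⟩ : ∃ x : L, resCoord b x = u := ⟨liftVec b u, resCoord_liftVec b u⟩
    have hxmem : x ∈ M ⊔ N := by rw [hc.sup_eq_top]; trivial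
    obtain ⟨m, hm, n, hn, hmn⟩ := Submodule.mem_sup.mp hxmem
    have h1 : resCoord b m ∈ P := by
      have h := resCoord_mem_span b hm
      rwa [← Set.range_comp] at h
    have h2 : resCoord b n ∈ Q := by
      rw [← hNspan] at hn
      have h := resCoord_mem_span b hn
      rwa [← Set.range_comp] at h
    rw [← hx, ← hmn, resCoord_add]
    exact Submodule.add_mem_sup h1 h2
  have hdimP_le : Module.finrank k P ≤ t := finrank_range_le_card _
  have hdimQ : Module.finrank k Q ≤ r := hcardN ▸ finrank_range_le_card _
  have hge : s ≤ Module.finrank k P + Module.finrank k Q := by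
    calc s = Module.finrank k (⊤ : Submodule k (Fin s → k)) := by
            rw [finrank_top]; simp
      _ = Module.finrank k ↥(P ⊔ Q) := by rw [htop]
      _ ≤ _ := Submodule.finrank_add_le_finrank_add_finrank P Q
  have hPt : Module.finrank k P = t := by omega
  rw [linearIndependent_iff_card_eq_finrank_span]
  exact hPt.symm

end AuxStatement17

theorem statement_17 (R : Type*) [CommRing R] [IsLocalRing R]
    (hres : Infinite (IsLocalRing.ResidueField R))
    (L : Type*) [AddCommGroup L] [Module R L] [Module.Free R L] [Module.Finite R L]
    (s : ℕ) (hrank : Module.finrank R L = s)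
    (q l : ℕ) (hq : q < s) (V : Fin l → Fin q → L)
    (hV : ∀ i, IsUnimodular R s (V i)) :
    ∃ v : L, ∀ i, IsUnimodular R s (Fin.cons v (V i)) := by
  classical
  haveI := hres
  set k := IsLocalRing.ResidueField R
  let b : Module.Basis (Fin s) R L := Module.finBasisOfFinrankEq R L hrank
  -- residues of each unimodular sequence are linearly independent
  have hindep : ∀ i, LinearIndependent k fun j => resCoord b (V i j) := by
    intro i
    obtain ⟨N, hc, hfree, hfr⟩ := hV i Finset.univ (by
      simp [min_eq_right hq.le])
    have hset : V i '' ↑(Finset.univ : Finset (Fin q)) = Set.range (V i) := by simp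
    rw [hset] at hc hfree hfr
    refine lemB_statement17 b (V i) N hc hfree ?_
    rw [hfr]
    simp
  -- the spans of the residues are proper subspaces
  set W : Fin l → Submodule k (Fin s → k) :=
    fun i => Submodule.span k (Set.range fun j => resCoord b (V i j)) with hW
  have hne : ∀ i, W i ≠ ⊤ := by
    intro i htop'
    have h1 : Module.finrank k (W i) ≤ q := by
      simpa [Set.finrank] using finrank_range_le_card (fun j => resCoord b (V i j))
    have h2 : Module.finrank k (W i) = s := by
      rw [htop', finrank_top]; simp
    omega
  -- choose a vector avoiding all of them
  obtain ⟨u, hu⟩ : ∃ u : Fin s → k, ∀ i, u ∉ W i := by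
    by_contra h
    push_neg at h
    have hU : ⋃ i, ((W i : Set (Fin s → k))) = Set.univ := by
      ext x
      simp only [Set.mem_iUnion, Set.mem_univ, iff_true, SetLike.mem_coe]
      exact h x
    obtain ⟨i, hi⟩ := Subspace.exists_eq_top_of_iUnion_eq_univ hU
    exact hne i hi
  refine ⟨liftVec b u, fun i => ?_⟩
  set v0 : L := liftVec b u with hv0
  set F : Fin (q+1) → L := Fin.cons v0 (V i) with hF
  -- residues of the extended family are linearly independent
  have hcons : LinearIndependent k fun j => resCoord b (F j) := by
    have heq : (fun j => resCoord b (F j))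
        = Fin.cons (resCoord b v0) (fun j => resCoord b (V i j)) := by
      funext j
      refine Fin.cases ?_ ?_ j <;> simp [hF]
    rw [heq, linearIndependent_fin_cons]
    refine ⟨hindep i, ?_⟩
    rw [hv0, resCoord_liftVec]
    exact hu i
  -- conclude unimodularity subset by subset
  intro s' hcard
  have himg : F '' ↑s' = Set.range (fun x : ↥s' => F ↑x) := by
    ext y
    simp [Set.mem_image, Subtype.exists]
  rw [himg]
  obtain ⟨N, hc, hfree, hfr⟩ := lemA_statement17 b
    (fun x : ↥s' => F ↑x)
    (hcons.comp Subtype.val Subtype.val_injective)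
  exact ⟨N, hc, hfree, by rw [hfr, Fintype.card_coe]⟩
end

section
/- Let R be a commutative ring with 2 invertible and 1 ≤ k ≤ n. The kernel L_k of the block-projection homomorphism ρ : T_k → O_{n−k,n−k}(R) fits into a central extension of groups 1 → (R^{k(k−1)/2}, +) → L_k → ((R^{2(n−k)})^k, +) → 1, where the quotient map sends an element of L_k to its tuple of column vectors (x₁, …, x_k) ∈ (R^{2(n−k)})^k, and the kernel of this quotient map is the abelian group of matrices in L_k with all xᵢ = 0, which is isomorphic to (R^{k(k−1)/2}, +) via the strictly-upper-triangular coordinates cⱼⁱ (i < j). -/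
open Matrix Function

namespace P19
variable {n k : ℕ} {R : Type*} [CommRing R]

variable {n k : ℕ} {R : Type*} [CommRing R]

def pt (p : Fin (2*n)) : Fin (2*n) :=
  ⟨if p.val % 2 = 0 then p.val + 1 else p.val - 1, by have := p.isLt; split <;> omega⟩

lemma pt_val (p : Fin (2*n)) : (pt p).val = if p.val % 2 = 0 then p.val + 1 else p.val - 1 := rfl

lemma pt_pt (p : Fin (2*n)) : pt (pt p) = p := by
  apply Fin.ext; rw [pt_val, pt_val]; have := p.isLt; split_ifs <;> omega

lemma eq_pt_comm {q t : Fin (2*n)} : q = pt t ↔ t = pt q := by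
  constructor <;> (rintro rfl; rw [pt_pt])

lemma psi_apply (p q : Fin (2*n)) : psi n R p q = if q = pt p then (1:R) else 0 := by
  have h : (p.val / 2 = q.val / 2 ∧ p.val ≠ q.val) ↔ q = pt p := by
    rw [Fin.ext_iff, pt_val]; have := p.isLt; have := q.isLt
    split_ifs <;> omega
  simp only [psi, Matrix.of_apply]
  exact if_congr h rfl rfl

lemma psi_mul (M : Matrix (Fin (2*n)) (Fin (2*n)) R) (p q : Fin (2*n)) :
    (psi n R * M) p q = M (pt p) q := by
  rw [Matrix.mul_apply]
  simp [psi_apply, ite_mul]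

lemma mul_psi (M : Matrix (Fin (2*n)) (Fin (2*n)) R) (p q : Fin (2*n)) :
    (M * psi n R) p q = M p (pt q) := by
  rw [Matrix.mul_apply]
  have : ∀ t : Fin (2*n), M p t * psi n R t q = M p t * (if t = pt q then 1 else 0) := by
    intro t; rw [psi_apply]
    congr 1
    exact if_congr eq_pt_comm rfl rfl
  simp only [this, mul_ite, mul_one, mul_zero]
  simp

lemma psi_psi : psi n R * psi n R = 1 := by
  ext p q
  rw [psi_mul, psi_apply, pt_pt, Matrix.one_apply]
  exact if_congr eq_comm rfl rfl


variable {n k : ℕ} {R : Type*} [CommRing R]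

structure Good (k : ℕ) (A : Matrix (Fin (2*n)) (Fin (2*n)) R) : Prop where
  col : ∀ p q : Fin (2*n), q.val < 2*k → q.val % 2 = 0 → A p q = (1 : Matrix (Fin (2*n)) (Fin (2*n)) R) p q
  row : ∀ p q : Fin (2*n), p.val < 2*k → p.val % 2 = 1 → A p q = (1 : Matrix (Fin (2*n)) (Fin (2*n)) R) p q
  blk : ∀ p q : Fin (2*n), 2*k ≤ p.val → 2*k ≤ q.val → A p q = (1 : Matrix (Fin (2*n)) (Fin (2*n)) R) p q

lemma mulAdd {A B : Matrix (Fin (2*n)) (Fin (2*n)) R} (hA : Good k A) (hB : Good k B)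
    (p q : Fin (2*n))
    (hside : ∀ t : Fin (2*n), 2*k ≤ t.val →
      A p t = (1 : Matrix (Fin (2*n)) (Fin (2*n)) R) p t ∨
      B t q = (1 : Matrix (Fin (2*n)) (Fin (2*n)) R) t q) :
    (A*B) p q = A p q + B p q - (1 : Matrix (Fin (2*n)) (Fin (2*n)) R) p q := by
  have key : A * B = (A - 1) * (B - 1) + A + B - 1 := by noncomm_ring
  have hz : ((A - 1) * (B - 1)) p q = 0 := by
    rw [Matrix.mul_apply]
    apply Finset.sum_eq_zero
    intro t _
    rcases lt_or_ge t.val (2*k) with ht | ht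
    · rcases Nat.even_or_odd t.val with he | ho
      · have : A p t - (1 : Matrix (Fin (2*n)) (Fin (2*n)) R) p t = 0 := by
          rw [hA.col p t ht (Nat.even_iff.mp he)]; ring
        simp [Matrix.sub_apply] at this ⊢
        rw [this]; ring
      · have : B t q - (1 : Matrix (Fin (2*n)) (Fin (2*n)) R) t q = 0 := by
          rw [hB.row t q ht (Nat.odd_iff.mp ho)]; ring
        simp [Matrix.sub_apply] at this ⊢
        rw [this]; ring
    · rcases hside t ht with h | h
      · have : A p t - (1 : Matrix (Fin (2*n)) (Fin (2*n)) R) p t = 0 := by rw [h]; ring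
        simp [Matrix.sub_apply] at this ⊢
        rw [this]; ring
      · have : B t q - (1 : Matrix (Fin (2*n)) (Fin (2*n)) R) t q = 0 := by rw [h]; ring
        simp [Matrix.sub_apply] at this ⊢
        rw [this]; ring
  rw [key]
  simp only [Matrix.sub_apply, Matrix.add_apply, hz]
  ring


variable {n k : ℕ} {R : Type*} [CommRing R]


def xext (k : ℕ) (x : Fin k → Fin (2*(n-k)) → R) (i : Fin k) (t : Fin (2*n)) : R :=
  if h : 2*k ≤ t.val ∧ k ≤ n then x i ⟨t.val - 2*k, by have := t.isLt; omega⟩ else 0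

lemma xext_lt {x : Fin k → Fin (2*(n-k)) → R} {i : Fin k} {t : Fin (2*n)}
    (h : t.val < 2*k) : xext k x i t = 0 := by
  rw [xext, dif_neg]; omega

lemma xext_ge {x : Fin k → Fin (2*(n-k)) → R} {i : Fin k} {t : Fin (2*n)}
    (hkn : k ≤ n) (h : 2*k ≤ t.val) :
    xext k x i t = x i ⟨t.val - 2*k, by have := t.isLt; omega⟩ := by
  rw [xext, dif_pos ⟨h, hkn⟩]

def pairS (k : ℕ) (x : Fin k → Fin (2*(n-k)) → R) (i j : Fin k) : R :=
  ∑ t : Fin (2*n), xext k x i t * xext k x j (pt t)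

lemma pairS_symm (x : Fin k → Fin (2*(n-k)) → R) (i j : Fin k) :
    pairS k x i j = pairS k x j i := by
  unfold pairS
  have hbij : Function.Bijective (pt : Fin (2*n) → Fin (2*n)) :=
    Function.Involutive.bijective (fun p => by
      apply Fin.ext; rw [pt_val, pt_val]; have := p.isLt; split_ifs <;> omega)
  refine Fintype.sum_bijective pt hbij _ _ (fun t => ?_)
  have hpp : pt (pt t) = t := by
    apply Fin.ext; rw [pt_val, pt_val]; have := t.isLt; split_ifs <;> omega
  rw [hpp, mul_comm]

def Ngen (k : ℕ) (x : Fin k → Fin (2*(n-k)) → R) (d : Fin k → Fin k → R) :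
    Matrix (Fin (2*n)) (Fin (2*n)) R :=
  Matrix.of fun p q =>
    if hq : q.val < 2*k ∧ q.val % 2 = 1 then
      (if hp : p.val < 2*k ∧ p.val % 2 = 0 then
        d ⟨p.val/2, by omega⟩ ⟨q.val/2, by omega⟩
       else xext k x ⟨q.val/2, by omega⟩ p)
    else if hq2 : 2*k ≤ q.val ∧ p.val < 2*k ∧ p.val % 2 = 0 then
      - xext k x ⟨p.val/2, by omega⟩ (pt q)
    else 0

section NgenLemmas
variable {x : Fin k → Fin (2*(n-k)) → R} {d : Fin k → Fin k → R}

lemma Ngen_row_odd {p q : Fin (2*n)} (h1 : p.val < 2*k) (h2 : p.val % 2 = 1) :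
    Ngen k x d p q = 0 := by
  unfold Ngen
  simp only [Matrix.of_apply]
  split_ifs <;> first | rfl | exact xext_lt h1 | (exfalso; omega)

lemma Ngen_col_even {p q : Fin (2*n)} (h1 : q.val < 2*k) (h2 : q.val % 2 = 0) :
    Ngen k x d p q = 0 := by
  unfold Ngen
  simp only [Matrix.of_apply]
  split_ifs <;> first | rfl | (exfalso; omega)

lemma Ngen_blk {p q : Fin (2*n)} (h1 : 2*k ≤ p.val) (h2 : 2*k ≤ q.val) :
    Ngen k x d p q = 0 := by
  unfold Ngen
  simp only [Matrix.of_apply]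
  split_ifs <;> first | rfl | (exfalso; omega)

lemma Ngen_x {p q : Fin (2*n)} (h1 : q.val < 2*k) (h2 : q.val % 2 = 1)
    (h3 : ¬(p.val < 2*k ∧ p.val % 2 = 0)) :
    Ngen k x d p q = xext k x ⟨q.val/2, by omega⟩ p := by
  unfold Ngen
  simp only [Matrix.of_apply]
  rw [dif_pos ⟨h1, h2⟩, dif_neg h3]

lemma Ngen_d {p q : Fin (2*n)} (h1 : q.val < 2*k) (h2 : q.val % 2 = 1)
    (h3 : p.val < 2*k) (h4 : p.val % 2 = 0) :
    Ngen k x d p q = d ⟨p.val/2, by omega⟩ ⟨q.val/2, by omega⟩ := by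
  unfold Ngen
  simp only [Matrix.of_apply]
  rw [dif_pos ⟨h1, h2⟩, dif_pos ⟨h3, h4⟩]

lemma Ngen_u {p q : Fin (2*n)} (h1 : 2*k ≤ q.val) (h3 : p.val < 2*k) (h4 : p.val % 2 = 0) :
    Ngen k x d p q = - xext k x ⟨p.val/2, by omega⟩ (pt q) := by
  unfold Ngen
  simp only [Matrix.of_apply]
  rw [dif_neg (by omega), dif_pos ⟨h1, h3, h4⟩]

end NgenLemmas

section More
variable {n k : ℕ} {R : Type*} [CommRing R]

variable {n k : ℕ} {R : Type*} [CommRing R]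


lemma pt_even {p : Fin (2*n)} (h : p.val % 2 = 0) : (pt p).val = p.val + 1 := by
  rw [pt_val, if_pos h]

lemma pt_odd {p : Fin (2*n)} (h : p.val % 2 = 1) : (pt p).val = p.val - 1 := by
  rw [pt_val, if_neg (by omega)]

variable {x : Fin k → Fin (2*(n-k)) → R} {d : Fin k → Fin k → R}

lemma Mgen_orth (hkn : k ≤ n) (hd : ∀ i j, d i j + d j i + pairS k x i j = 0) :
    (1 + Ngen k x d)ᵀ * psi n R * (1 + Ngen k x d) = psi n R := by
  set N := Ngen k x d with hN
  have expand : (1+N)ᵀ * psi n R * (1+N)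
      = psi n R + (Nᵀ * psi n R + psi n R * N + Nᵀ * (psi n R * N)) := by
    rw [Matrix.transpose_add, Matrix.transpose_one]
    noncomm_ring
  suffices h : Nᵀ * psi n R + psi n R * N + Nᵀ * (psi n R * N) = 0 by
    rw [expand, h, add_zero]
  ext p q
  simp only [Matrix.add_apply, Matrix.zero_apply]
  have e1 : (Nᵀ * psi n R) p q = N (pt q) p := by rw [mul_psi, Matrix.transpose_apply]
  have e2 : (psi n R * N) p q = N (pt p) q := psi_mul N p q
  have e3 : (Nᵀ * (psi n R * N)) p q = ∑ t : Fin (2*n), N t p * N (pt t) q := by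
    rw [Matrix.mul_apply]
    refine Finset.sum_congr rfl (fun t _ => ?_)
    rw [Matrix.transpose_apply, psi_mul]
  rw [e1, e2, e3]
  have hp2 := p.isLt
  have hq2 := q.isLt
  by_cases hpE : p.val < 2*k ∧ p.val % 2 = 0
  · have z1 : N (pt q) p = 0 := Ngen_col_even hpE.1 hpE.2
    have z2 : N (pt p) q = 0 := Ngen_row_odd (by rw [pt_even hpE.2]; omega) (by rw [pt_even hpE.2]; omega)
    have z3 : ∀ t : Fin (2*n), N t p * N (pt t) q = 0 := fun t => by
      rw [show N t p = 0 from Ngen_col_even hpE.1 hpE.2, zero_mul]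
    rw [z1, z2, Finset.sum_eq_zero (fun t _ => z3 t)]; ring
  · by_cases hqE : q.val < 2*k ∧ q.val % 2 = 0
    · have z1 : N (pt q) p = 0 := Ngen_row_odd (by rw [pt_even hqE.2]; omega) (by rw [pt_even hqE.2]; omega)
      have z2 : N (pt p) q = 0 := Ngen_col_even hqE.1 hqE.2
      have z3 : ∀ t : Fin (2*n), N t p * N (pt t) q = 0 := fun t => by
        rw [show N (pt t) q = 0 from Ngen_col_even hqE.1 hqE.2, mul_zero]
      rw [z1, z2, Finset.sum_eq_zero (fun t _ => z3 t)]; ring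
    · by_cases hpL : p.val < 2*k
      · have hpO : p.val % 2 = 1 := by omega
        by_cases hqL : q.val < 2*k
        · -- case (c): both odd < 2k
          have hqO : q.val % 2 = 1 := by omega
          set i : Fin k := ⟨p.val/2, by omega⟩ with hi
          set j : Fin k := ⟨q.val/2, by omega⟩ with hj
          have hA : N (pt q) p = d j i := by
            rw [hN, Ngen_d hpL hpO (by rw [pt_odd hqO]; omega) (by rw [pt_odd hqO]; omega)]
            congr 1
            exact Fin.ext (by simp only [pt_odd hqO, hj, Fin.val_mk]; omega)
          have hB : N (pt p) q = d i j := by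
            rw [hN, Ngen_d hqL hqO (by rw [pt_odd hpO]; omega) (by rw [pt_odd hpO]; omega)]
            congr 1
            exact Fin.ext (by simp only [pt_odd hpO, hi, Fin.val_mk]; omega)
          have hC : ∑ t : Fin (2*n), N t p * N (pt t) q = pairS k x i j := by
            refine Finset.sum_congr rfl (fun t _ => ?_)
            have ht2 := t.isLt
            by_cases htL : t.val < 2*k
            · rcases Nat.even_or_odd t.val with he | ho
              · have htE := Nat.even_iff.mp he
                rw [hN, Ngen_row_odd (p := pt t) (by rw [pt_even htE]; omega) (by rw [pt_even htE]; omega),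
                  mul_zero, xext_lt htL, zero_mul]
              · have htO := Nat.odd_iff.mp ho
                rw [hN, Ngen_x hpL hpO (by omega), xext_lt htL]; simp
            · have hptt : 2*k ≤ (pt t).val := by rw [pt_val]; split <;> omega
              rw [hN, Ngen_x hpL hpO (by omega), Ngen_x hqL hqO (by omega)]
          rw [hA, hB, hC]
          linear_combination hd i j
        · -- case (d): p odd < 2k, q ≥ 2k
          have hqG : 2*k ≤ q.val := by omega
          set i : Fin k := ⟨p.val/2, by omega⟩ with hi
          have hptq : 2*k ≤ (pt q).val := by rw [pt_val]; split <;> omega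
          have hA : N (pt q) p = xext k x i (pt q) := by
            rw [hN, Ngen_x hpL hpO (by omega)]
          have hB : N (pt p) q = - xext k x i (pt q) := by
            rw [hN, Ngen_u hqG (by rw [pt_odd hpO]; omega) (by rw [pt_odd hpO]; omega)]
            congr 2
            exact Fin.ext (by simp only [pt_odd hpO, hi, Fin.val_mk]; omega)
          have hC : ∀ t : Fin (2*n), N t p * N (pt t) q = 0 := by
            intro t
            have ht2 := t.isLt
            by_cases htL : t.val < 2*k
            · rcases Nat.even_or_odd t.val with he | ho
              · have htE := Nat.even_iff.mp he
                rw [hN, Ngen_row_odd (p := pt t) (by rw [pt_even htE]; omega) (by rw [pt_even htE]; omega), mul_zero]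
              · have htO := Nat.odd_iff.mp ho
                rw [hN, Ngen_x hpL hpO (by omega), xext_lt htL, zero_mul]
            · have hptt : 2*k ≤ (pt t).val := by rw [pt_val]; split <;> omega
              rw [hN, Ngen_blk (by omega) hqG, mul_zero]
          rw [hA, hB, Finset.sum_eq_zero (fun t _ => hC t)]
          ring
      · have hpG : 2*k ≤ p.val := by omega
        have hptp : 2*k ≤ (pt p).val := by rw [pt_val]; split <;> omega
        by_cases hqL : q.val < 2*k
        · -- case (e): p ≥ 2k, q odd < 2k
          have hqO : q.val % 2 = 1 := by omega
          set j : Fin k := ⟨q.val/2, by omega⟩ with hj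
          have hA : N (pt q) p = - xext k x j (pt p) := by
            rw [hN, Ngen_u hpG (by rw [pt_odd hqO]; omega) (by rw [pt_odd hqO]; omega)]
            congr 2
            exact Fin.ext (by simp only [pt_odd hqO, hj, Fin.val_mk]; omega)
          have hB : N (pt p) q = xext k x j (pt p) := by
            rw [hN, Ngen_x hqL hqO (by omega)]
          have hC : ∀ t : Fin (2*n), N t p * N (pt t) q = 0 := by
            intro t
            have ht2 := t.isLt
            by_cases htL : t.val < 2*k
            · rcases Nat.even_or_odd t.val with he | ho
              · have htE := Nat.even_iff.mp he
                rw [hN, Ngen_row_odd (p := pt t) (by rw [pt_even htE]; omega) (by rw [pt_even htE]; omega), mul_zero]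
              · have htO := Nat.odd_iff.mp ho
                rw [hN, Ngen_row_odd htL htO, zero_mul]
            · rw [hN, Ngen_blk (by omega) hpG, zero_mul]
          rw [hA, hB, Finset.sum_eq_zero (fun t _ => hC t)]
          ring
        · -- case (f): both ≥ 2k
          have hqG : 2*k ≤ q.val := by omega
          have hptq : 2*k ≤ (pt q).val := by rw [pt_val]; split <;> omega
          have hA : N (pt q) p = 0 := Ngen_blk hptq hpG
          have hB : N (pt p) q = 0 := Ngen_blk hptp hqG
          have hC : ∀ t : Fin (2*n), N t p * N (pt t) q = 0 := by
            intro t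
            have ht2 := t.isLt
            by_cases htL : t.val < 2*k
            · rcases Nat.even_or_odd t.val with he | ho
              · have htE := Nat.even_iff.mp he
                rw [hN, Ngen_row_odd (p := pt t) (by rw [pt_even htE]; omega) (by rw [pt_even htE]; omega), mul_zero]
              · have htO := Nat.odd_iff.mp ho
                rw [hN, Ngen_row_odd htL htO, zero_mul]
            · rw [hN, Ngen_blk (by omega) hpG, zero_mul]
          rw [hA, hB, Finset.sum_eq_zero (fun t _ => hC t)]
          ring


lemma Mgen_good {x : Fin k → Fin (2*(n-k)) → R} {d : Fin k → Fin k → R} :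
    Good k (1 + Ngen k x d) where
  col p q h1 h2 := by
    simp only [Matrix.add_apply, Ngen_col_even h1 h2, add_zero]
  row p q h1 h2 := by
    simp only [Matrix.add_apply, Ngen_row_odd h1 h2, add_zero]
  blk p q h1 h2 := by
    simp only [Matrix.add_apply, Ngen_blk h1 h2, add_zero]

lemma Mgen_fix {x : Fin k → Fin (2*(n-k)) → R} {d : Fin k → Fin k → R}
    (q : Fin (2*n)) (h1 : q.val < 2*k) (h2 : q.val % 2 = 0) :
    (1 + Ngen k x d) *ᵥ Pi.single q 1 = Pi.single q 1 := by
  rw [Matrix.mulVec_single]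
  funext p
  show (1 + Ngen k x d) p q * 1 = (Pi.single q (1:R) : Fin (2*n) → R) p
  rw [mul_one, Mgen_good.col p q h1 h2, Matrix.one_apply, Pi.single_apply]

lemma inv_entry {M Minv : Matrix (Fin (2*n)) (Fin (2*n)) R}
    (hO : Mᵀ * psi n R * M = psi n R) (hMi : M * Minv = 1) (p q : Fin (2*n)) :
    Minv p q = M (pt q) (pt p) := by
  have h1 : (psi n R * Mᵀ * psi n R) * M = 1 := by
    calc (psi n R * Mᵀ * psi n R) * M = psi n R * (Mᵀ * psi n R * M) := by
          simp only [Matrix.mul_assoc]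
      _ = 1 := by rw [hO, psi_psi]
  have h2 : psi n R * Mᵀ * psi n R = Minv := by
    calc psi n R * Mᵀ * psi n R
        = (psi n R * Mᵀ * psi n R) * (M * Minv) := by rw [hMi, Matrix.mul_one]
      _ = ((psi n R * Mᵀ * psi n R) * M) * Minv := by simp only [Matrix.mul_assoc]
      _ = Minv := by rw [h1, Matrix.one_mul]
  rw [← h2, mul_psi, psi_mul, Matrix.transpose_apply]

lemma half_cancel (h2 : IsUnit (2:R)) {a : R} (h : a + a = 0) : a = 0 := by
  have hu : (2:R) * ↑h2.unit⁻¹ = 1 := by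
    have := Units.mul_inv h2.unit
    rwa [h2.unit_spec] at this
  calc a = (2 * ↑h2.unit⁻¹) * a := by rw [hu, one_mul]
    _ = ↑h2.unit⁻¹ * (a + a) := by ring
    _ = 0 := by rw [h, mul_zero]

end More
end P19

set_option maxHeartbeats 1600000 in
set_option synthInstance.maxHeartbeats 400000 in
theorem statement_19 (n k : ℕ) (R : Type*) [CommRing R]
    (h2 : IsUnit (2 : R)) (hk1 : 1 ≤ k) (hkn : k ≤ n)
    (Tk : Subgroup (GL (Fin (2*n)) R))
    (hTk : Tk = Onn n R ⊓ stabOf n R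
      {w | ∃ i : Fin k, w = eVec n R ⟨i.val, by have := i.isLt; omega⟩})
    (ρ : ↥Tk →* ↥(Onn (n-k) R))
    (hρ : ∀ (A : ↥Tk) (i j : Fin (2*(n-k))),
      ((↑(ρ A) : GL (Fin (2*(n-k))) R) : Matrix (Fin (2*(n-k))) (Fin (2*(n-k))) R) i j =
        ((↑A : GL (Fin (2*n)) R) : Matrix (Fin (2*n)) (Fin (2*n)) R)
          ⟨2*k + i.val, by have := i.isLt; omega⟩
          ⟨2*k + j.val, by have := j.isLt; omega⟩) :
    ∃ π : ↥ρ.ker →* Multiplicative (Fin k → Fin (2*(n-k)) → R),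
      (∀ (A : ↥ρ.ker) (i : Fin k) (j : Fin (2*(n-k))),
        Multiplicative.toAdd (π A) i j =
          ((↑(↑A : ↥Tk) : GL (Fin (2*n)) R) : Matrix (Fin (2*n)) (Fin (2*n)) R)
            ⟨2*k + j.val, by have := j.isLt; omega⟩
            ⟨2*i.val + 1, by have := i.isLt; omega⟩) ∧
      Function.Surjective π ∧
      π.ker ≤ Subgroup.center ↥ρ.ker ∧
      ∃ iso : ↥π.ker ≃* Multiplicative ({p : Fin k × Fin k // p.1 < p.2} → R),
        ∀ (A : ↥π.ker) (p : {p : Fin k × Fin k // p.1 < p.2}),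
          Multiplicative.toAdd (iso A) p =
            ((↑(↑(↑A : ↥ρ.ker) : ↥Tk) : GL (Fin (2*n)) R) : Matrix (Fin (2*n)) (Fin (2*n)) R)
              ⟨2*p.val.1.val, by have := p.val.1.isLt; omega⟩
              ⟨2*p.val.2.val + 1, by have := p.val.2.isLt; omega⟩ := by
  subst hTk
  let mat : ↥(MonoidHom.ker ρ) → Matrix (Fin (2*n)) (Fin (2*n)) R := fun A =>
    (((A : ↥(Onn n R ⊓ stabOf n R {w | ∃ i : Fin k, w = eVec n R ⟨i.val, by have := i.isLt; omega⟩})) : GL (Fin (2*n)) R) : Matrix (Fin (2*n)) (Fin (2*n)) R)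
  have h_col : ∀ A : ↥(MonoidHom.ker ρ), ∀ p q : Fin (2*n), q.val < 2*k → q.val % 2 = 0 →
      mat A p q = (1 : Matrix (Fin (2*n)) (Fin (2*n)) R) p q := by
    intro A p q hq1 hq2
    have hS := A.1.2.2
    have hmem : eVec n R ⟨q.val/2, by omega⟩ ∈
        {w | ∃ i : Fin k, w = eVec n R ⟨i.val, by have := i.isLt; omega⟩} :=
      ⟨⟨q.val/2, by omega⟩, rfl⟩
    have h1 := hS _ hmem
    rw [eVec] at h1
    have h2 : (⟨2*(q.val/2), by omega⟩ : Fin (2*n)) = q := Fin.ext (by simp; omega)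
    rw [h2, Matrix.mulVec_single] at h1
    have h3 := congrFun h1 p
    change mat A p q * 1 = (Pi.single q (1:R) : Fin (2*n) → R) p at h3
    simp only [mul_one] at h3
    rw [Matrix.one_apply]
    rw [Pi.single_apply] at h3
    exact h3
  have h_blk : ∀ A : ↥(MonoidHom.ker ρ), ∀ p q : Fin (2*n), 2*k ≤ p.val → 2*k ≤ q.val →
      mat A p q = (1 : Matrix (Fin (2*n)) (Fin (2*n)) R) p q := by
    intro A p q hp1 hq1
    have hK : ρ A.1 = 1 := A.2
    have h1 := hρ A.1 ⟨p.val-2*k, by have := p.isLt; omega⟩ ⟨q.val-2*k, by have := q.isLt; omega⟩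
    rw [hK] at h1
    have hP : (⟨2*k+(p.val-2*k), by have := p.isLt; omega⟩ : Fin (2*n)) = p := Fin.ext (by simp; omega)
    have hQ : (⟨2*k+(q.val-2*k), by have := q.isLt; omega⟩ : Fin (2*n)) = q := Fin.ext (by simp; omega)
    rw [hP, hQ] at h1
    have h2 : ((↑((1:↥(Onn (n-k) R))) : GL (Fin (2*(n-k))) R) : Matrix (Fin (2*(n-k))) (Fin (2*(n-k))) R)
        = 1 := rfl
    rw [h2, Matrix.one_apply] at h1
    rw [Matrix.one_apply]
    refine (h1.symm).trans ?_
    refine if_congr ?_ rfl rfl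
    rw [Fin.ext_iff, Fin.ext_iff]
    show p.val - 2*k = q.val - 2*k ↔ p.val = q.val
    omega
  have h_row : ∀ A : ↥(MonoidHom.ker ρ), ∀ p q : Fin (2*n), p.val < 2*k → p.val % 2 = 1 →
      mat A p q = (1 : Matrix (Fin (2*n)) (Fin (2*n)) R) p q := by
    intro A p q hp1 hp2
    have hO : (mat A)ᵀ * psi n R * mat A = psi n R := A.1.2.1
    have hpe : p.val - 1 < 2*n := by have := p.isLt; omega
    have h1 : ((mat A)ᵀ * psi n R * mat A) ⟨p.val - 1, hpe⟩ q = psi n R ⟨p.val - 1, hpe⟩ q := by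
      rw [hO]
    rw [Matrix.mul_assoc, Matrix.mul_apply] at h1
    have h2 : ∀ t : Fin (2*n), (mat A)ᵀ ⟨p.val - 1, hpe⟩ t * (psi n R * mat A) t q
        = (if t = (⟨p.val - 1, hpe⟩ : Fin (2*n)) then 1 else 0) * (mat A) (P19.pt t) q := by
      intro t
      rw [Matrix.transpose_apply, P19.psi_mul,
        h_col A t ⟨p.val - 1, hpe⟩ (by show p.val - 1 < 2*k; omega)
          (by show (p.val - 1) % 2 = 0; omega), Matrix.one_apply]
    simp only [h2, ite_mul, one_mul, zero_mul] at h1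
    rw [Finset.sum_ite_eq' Finset.univ (⟨p.val - 1, hpe⟩ : Fin (2*n))
      (fun t => mat A (P19.pt t) q)] at h1
    simp only [Finset.mem_univ, if_true] at h1
    have h3 : P19.pt (⟨p.val - 1, hpe⟩ : Fin (2*n)) = p := Fin.ext (by
      rw [P19.pt_val]; show (if (p.val-1) % 2 = 0 then (p.val-1)+1 else (p.val-1)-1) = p.val
      split <;> omega)
    rw [h3, P19.psi_apply] at h1
    rw [Matrix.one_apply]
    refine h1.trans ?_
    rw [h3]
    exact if_congr eq_comm rfl rfl
  have h_good : ∀ A : ↥(MonoidHom.ker ρ), P19.Good k (mat A) := fun A =>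
    ⟨h_col A, h_row A, h_blk A⟩
  have h_mul : ∀ A B : ↥(MonoidHom.ker ρ), mat (A * B) = mat A * mat B := fun A B => rfl
  have h_invE : ∀ A : ↥(MonoidHom.ker ρ), ∀ p q : Fin (2*n),
      mat A⁻¹ p q = mat A (P19.pt q) (P19.pt p) := by
    intro A p q
    refine P19.inv_entry ?_ ?_ p q
    · exact A.1.2.1
    · exact Units.mul_inv _
  have h_build : ∀ (xv : Fin k → Fin (2*(n-k)) → R) (d : Fin k → Fin k → R),
      (∀ i j, d i j + d j i + P19.pairS k xv i j = 0) →
      ∃ A : ↥(MonoidHom.ker ρ), mat A = 1 + P19.Ngen k xv d := by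
    intro xv d hd
    have hOr := P19.Mgen_orth (x := xv) (d := d) hkn hd
    set M := 1 + P19.Ngen k xv d with hM
    have hVM : (psi n R * Mᵀ * psi n R) * M = 1 := by
      calc (psi n R * Mᵀ * psi n R) * M = psi n R * (Mᵀ * psi n R * M) := by
            simp only [Matrix.mul_assoc]
        _ = 1 := by rw [hOr, P19.psi_psi]
    have hMV : M * (psi n R * Mᵀ * psi n R) = 1 := mul_eq_one_comm.mp hVM
    set U : GL (Fin (2*n)) R := ⟨M, psi n R * Mᵀ * psi n R, hMV, hVM⟩ with hU
    have hOnn : U ∈ Onn n R := hOr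
    have hstab : U ∈ stabOf n R
        {w | ∃ i : Fin k, w = eVec n R ⟨i.val, by have := i.isLt; omega⟩} := by
      intro v hv
      obtain ⟨i, rfl⟩ := hv
      exact P19.Mgen_fix _ (by show 2*i.val < 2*k; have := i.isLt; omega)
        (by show (2*i.val) % 2 = 0; omega)
    have hker : (⟨U, Subgroup.mem_inf.mpr ⟨hOnn, hstab⟩⟩ :
        ↥(Onn n R ⊓ stabOf n R {w | ∃ i : Fin k, w = eVec n R ⟨i.val, by have := i.isLt; omega⟩}))
        ∈ MonoidHom.ker ρ := by
      rw [MonoidHom.mem_ker]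
      apply Subtype.ext
      apply Units.ext
      ext i j
      rw [hρ _ i j]
      show M ⟨2*k + i.val, _⟩ ⟨2*k + j.val, _⟩ = _
      rw [hM, Matrix.add_apply,
        P19.Ngen_blk (by show 2*k ≤ 2*k + i.val; omega) (by show 2*k ≤ 2*k + j.val; omega),
        add_zero, Matrix.one_apply]
      show _ = (1 : Matrix (Fin (2*(n-k))) (Fin (2*(n-k))) R) i j
      rw [Matrix.one_apply]
      refine if_congr ?_ rfl rfl
      rw [Fin.ext_iff, Fin.ext_iff]
      show 2*k + i.val = 2*k + j.val ↔ i.val = j.val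
      omega
    exact ⟨⟨_, hker⟩, rfl⟩
  have hπmul : ∀ (A B : ↥(MonoidHom.ker ρ)),
      Multiplicative.ofAdd (fun (i : Fin k) (j : Fin (2*(n-k))) =>
        mat (A * B) ⟨2*k + j.val, by have := j.isLt; omega⟩ ⟨2*i.val + 1, by have := i.isLt; omega⟩)
      = Multiplicative.ofAdd (fun (i : Fin k) (j : Fin (2*(n-k))) =>
        mat A ⟨2*k + j.val, by have := j.isLt; omega⟩ ⟨2*i.val + 1, by have := i.isLt; omega⟩)
      * Multiplicative.ofAdd (fun (i : Fin k) (j : Fin (2*(n-k))) =>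
        mat B ⟨2*k + j.val, by have := j.isLt; omega⟩ ⟨2*i.val + 1, by have := i.isLt; omega⟩) := by
    intro A B
    rw [← ofAdd_add]
    congr 1
    funext i j
    show mat (A*B) ⟨2*k + j.val, by have := j.isLt; omega⟩ ⟨2*i.val + 1, by have := i.isLt; omega⟩
      = mat A ⟨2*k + j.val, by have := j.isLt; omega⟩ ⟨2*i.val + 1, by have := i.isLt; omega⟩
        + mat B ⟨2*k + j.val, by have := j.isLt; omega⟩ ⟨2*i.val + 1, by have := i.isLt; omega⟩
    rw [h_mul]
    rw [P19.mulAdd (h_good A) (h_good B) _ _ (fun t ht =>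
      Or.inl (h_blk A _ t (by show 2*k ≤ 2*k + j.val; omega) ht))]
    rw [Matrix.one_apply_ne (by
        intro hEq
        have h' : 2*k + j.val = 2*i.val + 1 := congrArg Fin.val hEq
        have := i.isLt
        omega),
      sub_zero]
  let π₀ : ↥(MonoidHom.ker ρ) →* Multiplicative (Fin k → Fin (2*(n-k)) → R) :=
    MonoidHom.mk' (fun A => Multiplicative.ofAdd (fun (i : Fin k) (j : Fin (2*(n-k))) =>
      mat A ⟨2*k + j.val, by have := j.isLt; omega⟩ ⟨2*i.val + 1, by have := i.isLt; omega⟩)) hπmul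
  have hπker : ∀ B : ↥(MonoidHom.ker ρ), B ∈ MonoidHom.ker π₀ →
      ∀ (i : Fin k) (j : Fin (2*(n-k))),
        mat B ⟨2*k + j.val, by have := j.isLt; omega⟩ ⟨2*i.val + 1, by have := i.isLt; omega⟩
          = 0 := by
    intro B hB i j
    have hh := Multiplicative.ofAdd.injective
      ((MonoidHom.mem_ker.mp hB).trans ofAdd_zero.symm)
    exact congrFun (congrFun hh i) j
  have hxz : ∀ B : ↥(MonoidHom.ker ρ), B ∈ MonoidHom.ker π₀ →
      ∀ p q : Fin (2*n), 2*k ≤ p.val → q.val < 2*k → q.val % 2 = 1 → mat B p q = 0 := by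
    intro B hB p q hp hq1 hq2
    have h1 := hπker B hB ⟨q.val/2, by omega⟩ ⟨p.val - 2*k, by have := p.isLt; omega⟩
    have eP : (⟨2*k + (p.val - 2*k), by have := p.isLt; omega⟩ : Fin (2*n)) = p :=
      Fin.ext (by show 2*k + (p.val - 2*k) = p.val; omega)
    have eQ : (⟨2*(q.val/2) + 1, by omega⟩ : Fin (2*n)) = q :=
      Fin.ext (by show 2*(q.val/2) + 1 = q.val; omega)
    rw [eP, eQ] at h1
    exact h1
  have huz : ∀ B : ↥(MonoidHom.ker ρ), B ∈ MonoidHom.ker π₀ →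
      ∀ p q : Fin (2*n), p.val < 2*k → p.val % 2 = 0 → 2*k ≤ q.val → mat B p q = 0 := by
    intro B hB p q h1p h2p h3q
    have e := h_invE B⁻¹ p q
    rw [inv_inv B] at e
    rw [e]
    exact hxz B⁻¹ (Subgroup.inv_mem _ hB) (P19.pt q) (P19.pt p)
      (by rw [P19.pt_val]; split <;> omega)
      (by rw [P19.pt_even h2p]; omega) (by rw [P19.pt_even h2p]; omega)
  refine ⟨π₀, ?_, ?_, ?_, ?_⟩
  · -- spec
    intro A i j
    rfl
  · -- surjective
    intro y
    have hu2 : (2:R) * ↑h2.unit⁻¹ = 1 := by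
      have := Units.mul_inv h2.unit; rwa [h2.unit_spec] at this
    obtain ⟨A, hA⟩ := h_build (fun i j => Multiplicative.toAdd y i j)
      (fun i j => -(↑h2.unit⁻¹ * P19.pairS k (fun i j => Multiplicative.toAdd y i j) i j))
      (by
        intro i j
        show -(↑h2.unit⁻¹ * P19.pairS k (fun i j => Multiplicative.toAdd y i j) i j)
          + -(↑h2.unit⁻¹ * P19.pairS k (fun i j => Multiplicative.toAdd y i j) j i)
          + P19.pairS k (fun i j => Multiplicative.toAdd y i j) i j = 0
        rw [P19.pairS_symm _ j i]
        linear_combination (-(P19.pairS k (fun i j => Multiplicative.toAdd y i j) i j)) * hu2)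
    refine ⟨A, ?_⟩
    show Multiplicative.ofAdd _ = y
    conv_rhs => rw [← ofAdd_toAdd y]
    congr 1
    funext i j
    show mat A ⟨2*k + j.val, by have := j.isLt; omega⟩ ⟨2*i.val + 1, by have := i.isLt; omega⟩
      = Multiplicative.toAdd y i j
    rw [hA, Matrix.add_apply,
      P19.Ngen_x (by show 2*i.val+1 < 2*k; have := i.isLt; omega)
        (by show (2*i.val+1) % 2 = 1; omega)
        (by show ¬((2*k + j.val < 2*k) ∧ (2*k + j.val) % 2 = 0); omega),
      P19.xext_ge hkn (by show 2*k ≤ 2*k + j.val; omega),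
      Matrix.one_apply_ne (by
        intro hEq
        have h' : 2*k + j.val = 2*i.val + 1 := congrArg Fin.val hEq
        have := i.isLt
        omega),
      zero_add]
    exact congrArg₂ (fun (a : Fin k) (b : Fin (2*(n-k))) => Multiplicative.toAdd y a b)
      (Fin.ext (by show (2*i.val+1)/2 = i.val; omega))
      (Fin.ext (by show 2*k + j.val - 2*k = j.val; omega))
  · -- central
    intro A hA
    have hxA := hxz A hA
    have huA := huz A hA
    have hsideA : ∀ q t : Fin (2*n), 2*k ≤ t.val →
        mat A t q = (1 : Matrix (Fin (2*n)) (Fin (2*n)) R) t q := by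
      intro q t ht
      by_cases hq : q.val < 2*k
      · rcases Nat.even_or_odd q.val with he | ho
        · exact h_col A t q hq (Nat.even_iff.mp he)
        · rw [hxA t q ht hq (Nat.odd_iff.mp ho),
            Matrix.one_apply_ne (by intro e; have := congrArg Fin.val e; omega)]
      · exact h_blk A t q ht (by omega)
    have hsideA' : ∀ p t : Fin (2*n), 2*k ≤ t.val →
        mat A p t = (1 : Matrix (Fin (2*n)) (Fin (2*n)) R) p t := by
      intro p t ht
      by_cases hp : p.val < 2*k
      · rcases Nat.even_or_odd p.val with he | ho
        · rw [huA p t hp (Nat.even_iff.mp he) ht,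
            Matrix.one_apply_ne (by intro e; have := congrArg Fin.val e; omega)]
        · exact h_row A p t hp (Nat.odd_iff.mp ho)
      · exact h_blk A p t (by omega) ht
    rw [Subgroup.mem_center_iff]
    intro g
    refine Subtype.ext (Subtype.ext (Units.ext (Matrix.ext fun p q => ?_)))
    show mat (g*A) p q = mat (A*g) p q
    rw [h_mul, h_mul,
      P19.mulAdd (h_good g) (h_good A) p q (fun t ht => Or.inr (hsideA q t ht)),
      P19.mulAdd (h_good A) (h_good g) p q (fun t ht => Or.inl (hsideA' p t ht))]
    ring
  · -- iso
    have hφmul : ∀ (B C : ↥(MonoidHom.ker π₀)),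
        Multiplicative.ofAdd (fun pr : {p : Fin k × Fin k // p.1 < p.2} =>
          mat (B.1 * C.1) ⟨2*pr.val.1.val, by have := pr.val.1.isLt; omega⟩
            ⟨2*pr.val.2.val + 1, by have := pr.val.2.isLt; omega⟩)
        = Multiplicative.ofAdd (fun pr : {p : Fin k × Fin k // p.1 < p.2} =>
          mat B.1 ⟨2*pr.val.1.val, by have := pr.val.1.isLt; omega⟩
            ⟨2*pr.val.2.val + 1, by have := pr.val.2.isLt; omega⟩)
        * Multiplicative.ofAdd (fun pr : {p : Fin k × Fin k // p.1 < p.2} =>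
          mat C.1 ⟨2*pr.val.1.val, by have := pr.val.1.isLt; omega⟩
            ⟨2*pr.val.2.val + 1, by have := pr.val.2.isLt; omega⟩) := by
      intro B C
      rw [← ofAdd_add]
      congr 1
      funext pr
      have hq1 : 2*pr.val.2.val + 1 < 2*n := by have := pr.val.2.isLt; omega
      have hp1 : 2*pr.val.1.val < 2*n := by have := pr.val.1.isLt; omega
      show mat (B.1 * C.1) ⟨2*pr.val.1.val, hp1⟩ ⟨2*pr.val.2.val + 1, hq1⟩
        = mat B.1 ⟨2*pr.val.1.val, hp1⟩ ⟨2*pr.val.2.val + 1, hq1⟩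
          + mat C.1 ⟨2*pr.val.1.val, hp1⟩ ⟨2*pr.val.2.val + 1, hq1⟩
      rw [h_mul, P19.mulAdd (h_good B.1) (h_good C.1) _ _ (fun t ht => Or.inr (by
        rw [hxz C.1 C.2 t ⟨2*pr.val.2.val + 1, hq1⟩ ht
            (by show 2*pr.val.2.val + 1 < 2*k; have := pr.val.2.isLt; omega)
            (by show (2*pr.val.2.val + 1) % 2 = 1; omega),
          Matrix.one_apply_ne (by
            intro e
            have h' : t.val = 2*pr.val.2.val + 1 := congrArg Fin.val e
            omega)])),
        Matrix.one_apply_ne (by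
          intro e
          have h' : 2*pr.val.1.val = 2*pr.val.2.val + 1 := congrArg Fin.val e
          omega), sub_zero]
    refine ⟨MulEquiv.ofBijective (MonoidHom.mk' (fun B => Multiplicative.ofAdd
      (fun pr : {p : Fin k × Fin k // p.1 < p.2} =>
        mat B.1 ⟨2*pr.val.1.val, by have := pr.val.1.isLt; omega⟩
          ⟨2*pr.val.2.val + 1, by have := pr.val.2.isLt; omega⟩)) hφmul) ⟨?_, ?_⟩, ?_⟩
    · -- injective
      refine (injective_iff_map_eq_one _).mpr ?_
      intro B hB1
      have hupPr : ∀ pr : {p : Fin k × Fin k // p.1 < p.2},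
          mat B.1 ⟨2*pr.val.1.val, by have := pr.val.1.isLt; omega⟩
            ⟨2*pr.val.2.val + 1, by have := pr.val.2.isLt; omega⟩ = 0 := by
        intro pr
        have hh := Multiplicative.ofAdd.injective (hB1.trans ofAdd_zero.symm)
        exact congrFun hh pr
      have hxB := hxz B.1 B.2
      have hxBI := hxz B.1⁻¹ (Subgroup.inv_mem _ B.2)
      have huB := huz B.1 B.2
      have hanti : ∀ p q : Fin (2*n), p.val < 2*k → p.val % 2 = 0 →
          q.val < 2*k → q.val % 2 = 1 →
          mat B.1 (P19.pt q) (P19.pt p) = - mat B.1 p q := by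
        intro p q hp1 hp2 hq1 hq2
        have hid : mat B.1 * mat B.1⁻¹ = 1 := by
          rw [← h_mul, mul_inv_cancel]
          rfl
        have h2' := P19.mulAdd (h_good B.1) (h_good B.1⁻¹) p q (fun t ht => Or.inl (by
          rw [huB p t hp1 hp2 ht, Matrix.one_apply_ne (by
            intro e; have := congrArg Fin.val e; omega)]))
        rw [hid, Matrix.one_apply_ne (by intro e; have := congrArg Fin.val e; omega),
          h_invE B.1 p q] at h2'
        linear_combination (-1 : R) * h2'
      have hdiag : ∀ p : Fin (2*n), p.val < 2*k → p.val % 2 = 0 →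
          mat B.1 p (P19.pt p) = 0 := by
        intro p hp1 hp2
        have h3 := hanti p (P19.pt p) hp1 hp2
          (by rw [P19.pt_even hp2]; omega) (by rw [P19.pt_even hp2]; omega)
        rw [P19.pt_pt] at h3
        exact P19.half_cancel h2 (by linear_combination h3)
      have hup : ∀ p q : Fin (2*n), p.val < 2*k → p.val % 2 = 0 →
          q.val < 2*k → q.val % 2 = 1 → p.val/2 < q.val/2 → mat B.1 p q = 0 := by
        intro p q hp1 hp2 hq1 hq2 hlt
        have h1 := hupPr ⟨(⟨p.val/2, by omega⟩, ⟨q.val/2, by omega⟩), hlt⟩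
        have eP : (⟨2*(p.val/2), by have := p.isLt; omega⟩ : Fin (2*n)) = p :=
          Fin.ext (by show 2*(p.val/2) = p.val; omega)
        have eQ : (⟨2*(q.val/2) + 1, by have := q.isLt; omega⟩ : Fin (2*n)) = q :=
          Fin.ext (by show 2*(q.val/2) + 1 = q.val; omega)
        rw [eP, eQ] at h1
        exact h1
      refine Subtype.ext (Subtype.ext (Subtype.ext (Units.ext (Matrix.ext fun p q => ?_))))
      show mat B.1 p q = (1 : Matrix (Fin (2*n)) (Fin (2*n)) R) p q
      rcases Nat.lt_or_ge p.val (2*k) with hpL | hpG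
      · rcases Nat.even_or_odd p.val with he | ho
        · have hpe := Nat.even_iff.mp he
          rcases Nat.lt_or_ge q.val (2*k) with hqL | hqG
          · rcases Nat.even_or_odd q.val with he' | ho'
            · exact h_col B.1 p q hqL (Nat.even_iff.mp he')
            · have hqo := Nat.odd_iff.mp ho'
              rw [Matrix.one_apply_ne (by intro e; have := congrArg Fin.val e; omega)]
              rcases lt_trichotomy (p.val/2) (q.val/2) with h | h | h
              · exact hup p q hpL hpe hqL hqo h
              · have hq' : q = P19.pt p := Fin.ext (by rw [P19.pt_even hpe]; omega)
                rw [hq']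
                exact hdiag p hpL hpe
              · have h4 := hanti (P19.pt q) (P19.pt p)
                  (by rw [P19.pt_odd hqo]; omega) (by rw [P19.pt_odd hqo]; omega)
                  (by rw [P19.pt_even hpe]; omega) (by rw [P19.pt_even hpe]; omega)
                rw [P19.pt_pt, P19.pt_pt] at h4
                rw [h4, hup (P19.pt q) (P19.pt p)
                  (by rw [P19.pt_odd hqo]; omega) (by rw [P19.pt_odd hqo]; omega)
                  (by rw [P19.pt_even hpe]; omega) (by rw [P19.pt_even hpe]; omega)
                  (by rw [P19.pt_odd hqo, P19.pt_even hpe]; omega), neg_zero]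
          · rw [huB p q hpL hpe hqG,
              Matrix.one_apply_ne (by intro e; have := congrArg Fin.val e; omega)]
        · exact h_row B.1 p q hpL (Nat.odd_iff.mp ho)
      · rcases Nat.lt_or_ge q.val (2*k) with hqL | hqG
        · rcases Nat.even_or_odd q.val with he' | ho'
          · exact h_col B.1 p q hqL (Nat.even_iff.mp he')
          · rw [hxB p q hpG hqL (Nat.odd_iff.mp ho'),
              Matrix.one_apply_ne (by intro e; have := congrArg Fin.val e; omega)]
        · exact h_blk B.1 p q hpG hqG
    · -- surjective
      intro c
      set dd : Fin k → Fin k → R := fun i j =>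
        if h : i < j then Multiplicative.toAdd c ⟨(i,j), h⟩
        else if h' : j < i then - Multiplicative.toAdd c ⟨(j,i), h'⟩ else 0 with hdd
      have hS0 : ∀ i j : Fin k, P19.pairS (n := n) k (fun _ _ => (0:R)) i j = 0 := by
        intro i j
        unfold P19.pairS
        simp [P19.xext]
      have hd : ∀ i j : Fin k, dd i j + dd j i + P19.pairS (n := n) k (fun _ _ => (0:R)) i j = 0 := by
        intro i j
        rw [hS0, add_zero]
        simp only [hdd]
        rcases lt_trichotomy i j with h | h | h
        · rw [dif_pos h, dif_neg (lt_asymm h), dif_pos h]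
          ring
        · subst h
          rw [dif_neg (lt_irrefl i), dif_neg (lt_irrefl i)]
          ring
        · rw [dif_neg (lt_asymm h), dif_pos h, dif_pos h]
          ring
      obtain ⟨A0, hA0⟩ := h_build (fun _ _ => (0:R)) dd hd
      have hx0 : ∀ (i : Fin k) (j : Fin (2*(n-k))),
          mat A0 ⟨2*k + j.val, by have := j.isLt; omega⟩ ⟨2*i.val + 1, by have := i.isLt; omega⟩
            = 0 := by
        intro i j
        rw [hA0, Matrix.add_apply,
          P19.Ngen_x (by show 2*i.val + 1 < 2*k; have := i.isLt; omega)
            (by show (2*i.val + 1) % 2 = 1; omega)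
            (by show ¬((2*k + j.val < 2*k) ∧ (2*k + j.val) % 2 = 0); omega),
          Matrix.one_apply_ne (by
            intro e
            have h' : 2*k + j.val = 2*i.val + 1 := congrArg Fin.val e
            have := i.isLt
            omega), zero_add]
        simp [P19.xext]
      refine ⟨⟨A0, MonoidHom.mem_ker.mpr ?_⟩, ?_⟩
      · have hfun : (fun (i : Fin k) (j : Fin (2*(n-k))) =>
            mat A0 ⟨2*k + j.val, by have := j.isLt; omega⟩ ⟨2*i.val + 1, by have := i.isLt; omega⟩)
            = (0 : Fin k → Fin (2*(n-k)) → R) := funext fun i => funext fun j => hx0 i j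
        exact (congrArg Multiplicative.ofAdd hfun).trans ofAdd_zero
      · show Multiplicative.ofAdd _ = c
        conv_rhs => rw [← ofAdd_toAdd c]
        congr 1
        funext pr
        have hq1 : 2*pr.val.2.val + 1 < 2*n := by have := pr.val.2.isLt; omega
        have hp1 : 2*pr.val.1.val < 2*n := by have := pr.val.1.isLt; omega
        show mat A0 ⟨2*pr.val.1.val, hp1⟩ ⟨2*pr.val.2.val + 1, hq1⟩ = Multiplicative.toAdd c pr
        rw [hA0, Matrix.add_apply,
          Matrix.one_apply_ne (by
            intro e
            have h' : 2*pr.val.1.val = 2*pr.val.2.val + 1 := congrArg Fin.val e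
            omega), zero_add,
          P19.Ngen_d (by show 2*pr.val.2.val + 1 < 2*k; have := pr.val.2.isLt; omega)
            (by show (2*pr.val.2.val + 1) % 2 = 1; omega)
            (by show 2*pr.val.1.val < 2*k; have := pr.val.1.isLt; omega)
            (by show (2*pr.val.1.val) % 2 = 0; omega)]
        have e1 : (⟨(⟨2*pr.val.1.val, hp1⟩ : Fin (2*n)).val/2,
            by show (2*pr.val.1.val)/2 < k; have := pr.val.1.isLt; omega⟩ : Fin k) = pr.val.1 :=
          Fin.ext (by show (2*pr.val.1.val)/2 = pr.val.1.val; omega)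
        have e2 : (⟨(⟨2*pr.val.2.val + 1, hq1⟩ : Fin (2*n)).val/2,
            by show (2*pr.val.2.val + 1)/2 < k; have := pr.val.2.isLt; omega⟩ : Fin k) = pr.val.2 :=
          Fin.ext (by show (2*pr.val.2.val + 1)/2 = pr.val.2.val; omega)
        refine (congrArg₂ dd e1 e2).trans ?_
        rw [hdd]
        show (if h : pr.val.1 < pr.val.2 then Multiplicative.toAdd c ⟨(pr.val.1, pr.val.2), h⟩
          else if h' : pr.val.2 < pr.val.1 then - Multiplicative.toAdd c ⟨(pr.val.2, pr.val.1), h'⟩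
          else 0) = Multiplicative.toAdd c pr
        rw [dif_pos pr.2]
    · -- spec
      intro B pr
      rfl
end
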